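/- Let (u,v,w) : [0,T] → ℝ³ be a continuously differentiable solution of the tritrophic ODE system on [0,T] such that u(t) + a > 0 and v(t) + d > 0 for all t ∈ [0,T]. If u(0) ≥ 0, v(0) ≥ 0 and w(0) ≥ 0, then u(t) ≥ 0, v(t) ≥ 0 and w(t) ≥ 0 for all t ∈ [0,T]. -/

import Mathlib

open Set

/-- If `x' = g t * x t` on `[0,T]` with `g` continuous on `[0,T]` and `x 0 ≥ 0`,
then `x` stays nonnegative on `[0,T]`. -/
lemma nonneg_of_linear_ode (T : ℝ) (hT : 0 ≤ T) (x g : ℝ → ℝ)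
    (hg : ContinuousOn g (Icc 0 T))
    (hx : ∀ t ∈ Icc (0 : ℝ) T, HasDerivAt x (g t * x t) t)
    (hx0 : 0 ≤ x 0) : ∀ t ∈ Icc (0 : ℝ) T, 0 ≤ x t := by
  -- clamp to [0,T] to get a globally continuous coefficient
  set p : ℝ → ℝ := fun t => max 0 (min t T) with hp
  have hpmem : ∀ t, p t ∈ Icc (0 : ℝ) T := fun t =>
    ⟨le_max_left _ _, max_le hT (min_le_right _ _)⟩
  have hpc : Continuous p := continuous_const.max (continuous_id.min continuous_const)
  set g' : ℝ → ℝ := fun t => g (p t) with hg'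
  have hg'c : Continuous g' := hg.comp_continuous hpc hpmem
  have hpeq : ∀ t ∈ Icc (0 : ℝ) T, g' t = g t := by
    intro t ht
    simp [hg', hp, min_eq_left ht.2, max_eq_right ht.1]
  set G : ℝ → ℝ := fun t => ∫ s in (0:ℝ)..t, g' s with hG
  have hGd : ∀ t : ℝ, HasDerivAt G (g' t) t := by
    intro t
    exact intervalIntegral.integral_hasDerivAt_right
      (hg'c.intervalIntegrable 0 t)
      (hg'c.stronglyMeasurableAtFilter _ _)
      hg'c.continuousAt
  set y : ℝ → ℝ := fun t => x t * Real.exp (-G t) with hy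
  have hyd : ∀ t ∈ Icc (0 : ℝ) T, HasDerivAt y 0 t := by
    intro t ht
    have hE : HasDerivAt (fun t => Real.exp (-G t)) (Real.exp (-G t) * (-g' t)) t :=
      ((hGd t).neg).exp
    have := (hx t ht).mul hE
    have h0 : g t * x t * Real.exp (-G t) + x t * (Real.exp (-G t) * -g' t) = 0 := by
      rw [hpeq t ht]; ring
    rw [h0] at this
    exact this
  have hyc : ContinuousOn y (Icc 0 T) := fun t ht =>
    ((hyd t ht).continuousAt).continuousWithinAt
  have hconst : ∀ t ∈ Icc (0 : ℝ) T, y t = y 0 := by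
    intro t ht
    exact constant_of_has_deriv_right_zero hyc
      (fun s hs => (hyd s (Ico_subset_Icc_self hs)).hasDerivWithinAt) t ht
  intro t ht
  have h1 : x t * Real.exp (-G t) = x 0 * Real.exp (-G 0) := hconst t ht
  have h2 : (0:ℝ) < Real.exp (-G t) := Real.exp_pos _
  have h3 : (0:ℝ) < Real.exp (-G 0) := Real.exp_pos _
  nlinarith [mul_nonneg hx0 h3.le]

/-- Nonnegativity of solutions: if `(u,v,w)` is a continuously differentiable solution of
the tritrophic ODE system on `[0,T]` with `u(t)+a > 0` and `v(t)+d > 0` there, and the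
initial data at `t = 0` are nonnegative, then `u, v, w` stay nonnegative on `[0,T]`. -/
theorem solutions_stay_nonneg
    (α K a b c d γ μ ν β : ℝ)
    (hα : 0 < α) (hK : 0 < K) (ha : 0 < a) (hb : 0 < b) (hc : 0 < c)
    (hd : 0 < d) (hγ : 0 < γ) (hμ : 0 < μ) (hν : 0 < ν) (hβ : 0 < β)
    (T : ℝ) (hT : 0 ≤ T)
    (u v w : ℝ → ℝ)
    (hu : ∀ t ∈ Set.Icc (0 : ℝ) T,
      HasDerivAt u (α * u t * (1 - u t / K) - b * u t * v t / (u t + a)) t)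
    (hv : ∀ t ∈ Set.Icc (0 : ℝ) T,
      HasDerivAt v (γ * (b * u t * v t / (u t + a)) - c * v t * w t / (v t + d) - μ * v t) t)
    (hw : ∀ t ∈ Set.Icc (0 : ℝ) T,
      HasDerivAt w (β * (c * v t * w t / (v t + d)) - ν * w t) t)
    (hua : ∀ t ∈ Set.Icc (0 : ℝ) T, 0 < u t + a)
    (hvd : ∀ t ∈ Set.Icc (0 : ℝ) T, 0 < v t + d)
    (hu0 : 0 ≤ u 0) (hv0 : 0 ≤ v 0) (hw0 : 0 ≤ w 0) :
    ∀ t ∈ Set.Icc (0 : ℝ) T, 0 ≤ u t ∧ 0 ≤ v t ∧ 0 ≤ w t := by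
  have hucont : ContinuousOn u (Icc 0 T) := fun t ht =>
    (hu t ht).continuousAt.continuousWithinAt
  have hvcont : ContinuousOn v (Icc 0 T) := fun t ht =>
    (hv t ht).continuousAt.continuousWithinAt
  have hwcont : ContinuousOn w (Icc 0 T) := fun t ht =>
    (hw t ht).continuousAt.continuousWithinAt
  have huane : ∀ t ∈ Icc (0:ℝ) T, u t + a ≠ 0 := fun t ht => (hua t ht).ne'
  have hvdne : ∀ t ∈ Icc (0:ℝ) T, v t + d ≠ 0 := fun t ht => (hvd t ht).ne'
  have hU : ∀ t ∈ Icc (0:ℝ) T, 0 ≤ u t := by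
    apply nonneg_of_linear_ode T hT u (fun t => α * (1 - u t / K) - b * v t / (u t + a))
    · apply ContinuousOn.sub
      · exact continuousOn_const.mul (continuousOn_const.sub (hucont.div_const K))
      · exact (continuousOn_const.mul hvcont).div
          (hucont.add continuousOn_const) huane
    · intro t ht
      have h := hu t ht
      have hne := huane t ht
      convert h using 1
      field_simp
    · exact hu0
  have hV : ∀ t ∈ Icc (0:ℝ) T, 0 ≤ v t := by
    apply nonneg_of_linear_ode T hT v
      (fun t => γ * (b * u t / (u t + a)) - c * w t / (v t + d) - μ)
    · apply ContinuousOn.sub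
      · apply ContinuousOn.sub
        · exact continuousOn_const.mul
            ((continuousOn_const.mul hucont).div (hucont.add continuousOn_const) huane)
        · exact (continuousOn_const.mul hwcont).div
            (hvcont.add continuousOn_const) hvdne
      · exact continuousOn_const
    · intro t ht
      have h := hv t ht
      have hne1 := huane t ht
      have hne2 := hvdne t ht
      convert h using 1
      field_simp
    · exact hv0
  have hW : ∀ t ∈ Icc (0:ℝ) T, 0 ≤ w t := by
    apply nonneg_of_linear_ode T hT w (fun t => β * (c * v t / (v t + d)) - ν)
    · apply ContinuousOn.sub
      · exact continuousOn_const.mul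
          ((continuousOn_const.mul hvcont).div (hvcont.add continuousOn_const) hvdne)
      · exact continuousOn_const
    · intro t ht
      have h := hw t ht
      have hne := hvdne t ht
      convert h using 1
      field_simp
    · exact hw0
  exact fun t ht => ⟨hU t ht, hV t ht, hW t ht⟩
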